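/- For every H ∈ (1/4, 1/2) there exists a finite constant C_H > 0 (one may take C_H = (2^{H−3}/(2−H)) ∫_ℝ e^{−η²} |η|^{5−2H} dη) such that for all θ ∈ (0,1), all ε ∈ (0,1), and all t ≥ ε^θ: ∫_0^{t−ε^θ} ∫_ℝ e^{−2(t−s)ξ²} (1 − e^{−εξ²})² |ξ|^{1−2H} dξ ds ≤ C_H · ε^{H+(2−H)(1−θ)}. -/

import Mathlib

open MeasureTheory Real Set

lemma intAbs {b s : ℝ} (hb : 0 < b) (hs : -1 < s) :
    Integrable (fun x : ℝ => Real.exp (-b * x ^ 2) * |x| ^ s) := by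
  have base : IntegrableOn (fun x : ℝ => Real.exp (-b * x ^ 2) * |x| ^ s) (Ioi 0) := by
    refine ((integrableOn_rpow_mul_exp_neg_mul_sq hb hs).congr_fun (fun x hx => ?_)
      measurableSet_Ioi)
    rw [abs_of_pos hx]; ring
  rw [← integrableOn_univ, ← Iic_union_Ioi (a := (0:ℝ)), integrableOn_union]
  refine ⟨?_, base⟩
  rw [← Measure.map_neg_eq_self (volume : Measure ℝ)]
  have m : MeasurableEmbedding fun x : ℝ => -x := (Homeomorph.neg ℝ).measurableEmbedding
  rw [m.integrableOn_map_iff]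
  simp_rw [Function.comp_def, abs_neg, neg_sq, neg_preimage, neg_Iic, neg_zero]
  exact (integrableOn_Ici_iff_integrableOn_Ioi).mpr base

lemma scale {a : ℝ} (p : ℝ) (ha : 0 < a) :
    (∫ ξ : ℝ, Real.exp (-a * ξ ^ 2) * |ξ| ^ p)
      = a ^ (-(p + 1) / 2) * ∫ η : ℝ, Real.exp (-η ^ 2) * |η| ^ p := by
  set c := Real.sqrt a with hcdef
  have hc : 0 < c := Real.sqrt_pos.mpr ha
  have key := MeasureTheory.Measure.integral_comp_mul_left
    (fun x : ℝ => Real.exp (-x ^ 2) * |x| ^ p) c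
  have hgc : ∀ ξ : ℝ, Real.exp (-(c * ξ) ^ 2) * |c * ξ| ^ p
      = c ^ p * (Real.exp (-a * ξ ^ 2) * |ξ| ^ p) := by
    intro ξ
    have h1 : (c * ξ) ^ 2 = a * ξ ^ 2 := by
      rw [mul_pow, Real.sq_sqrt ha.le]
    have h2 : |c * ξ| ^ p = c ^ p * |ξ| ^ p := by
      rw [abs_mul, abs_of_pos hc, Real.mul_rpow hc.le (abs_nonneg ξ)]
    rw [h1, h2]; ring
  simp only [hgc] at key
  rw [integral_const_mul] at key
  have hcp : (0:ℝ) < c ^ p := Real.rpow_pos_of_pos hc p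
  have h3 : (∫ ξ : ℝ, Real.exp (-a * ξ ^ 2) * |ξ| ^ p)
      = c ^ (-1 - p) * ∫ η : ℝ, Real.exp (-η ^ 2) * |η| ^ p := by
    have := key
    rw [smul_eq_mul, abs_of_pos (inv_pos.mpr hc)] at this
    field_simp at this ⊢
    rw [Real.rpow_sub hc, Real.rpow_neg_one]
    field_simp
    linarith [this]
  rw [h3, hcdef, Real.sqrt_eq_rpow, ← Real.rpow_mul ha.le]
  congr 1
  ring

lemma ptwise {H ε : ℝ} (hH2 : H < 1 / 2) (hε : 0 ≤ ε) {a : ℝ} (ξ : ℝ) :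
    Real.exp (-a * ξ ^ 2) * (1 - Real.exp (-ε * ξ ^ 2)) ^ 2 * |ξ| ^ (1 - 2 * H)
      ≤ ε ^ 2 * (Real.exp (-a * ξ ^ 2) * |ξ| ^ (5 - 2 * H)) := by
  have hx : (0:ℝ) ≤ ε * ξ ^ 2 := by positivity
  have h1 : 0 ≤ 1 - Real.exp (-(ε * ξ ^ 2)) := by
    have := Real.exp_le_one_iff.mpr (neg_nonpos.mpr hx)
    linarith
  have h2 : 1 - Real.exp (-(ε * ξ ^ 2)) ≤ ε * ξ ^ 2 := by
    have := Real.add_one_le_exp (-(ε * ξ ^ 2))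
    linarith
  have hsq : (1 - Real.exp (-ε * ξ ^ 2)) ^ 2 ≤ (ε * ξ ^ 2) ^ 2 := by
    rw [neg_mul]
    exact pow_le_pow_left₀ h1 h2 2
  have habs : |ξ| ^ (5 - 2 * H) = ξ ^ 4 * |ξ| ^ (1 - 2 * H) := by
    have h4 : |ξ| ^ ((4:ℝ) + (1 - 2 * H)) = |ξ| ^ (4:ℝ) * |ξ| ^ (1 - 2 * H) :=
      Real.rpow_add' (abs_nonneg ξ) (by intro h; nlinarith)
    have h5 : |ξ| ^ (4:ℝ) = ξ ^ 4 := by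
      rw [show (4:ℝ) = ((4:ℕ):ℝ) by norm_num, Real.rpow_natCast, ← abs_pow,
        abs_of_nonneg (by positivity)]
    rw [show (5 - 2*H) = (4:ℝ) + (1 - 2 * H) by ring, h4, h5]
  rw [habs]
  have hE : (0:ℝ) ≤ Real.exp (-a * ξ ^ 2) := (Real.exp_pos _).le
  have hA : (0:ℝ) ≤ |ξ| ^ (1 - 2 * H) := Real.rpow_nonneg (abs_nonneg ξ) _
  calc Real.exp (-a * ξ ^ 2) * (1 - Real.exp (-ε * ξ ^ 2)) ^ 2 * |ξ| ^ (1 - 2 * H)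
      ≤ Real.exp (-a * ξ ^ 2) * (ε * ξ ^ 2) ^ 2 * |ξ| ^ (1 - 2 * H) := by
        apply mul_le_mul_of_nonneg_right _ hA
        exact mul_le_mul_of_nonneg_left hsq hE
    _ = ε ^ 2 * (Real.exp (-a * ξ ^ 2) * (ξ ^ 4 * |ξ| ^ (1 - 2 * H))) := by ring

lemma inner_le {H : ℝ} (hH2 : H < 1 / 2) {ε a : ℝ} (hε : 0 ≤ ε) (ha : 0 < a) :
    (∫ ξ : ℝ, Real.exp (-a * ξ ^ 2) * (1 - Real.exp (-ε * ξ ^ 2)) ^ 2 * |ξ| ^ (1 - 2 * H))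
      ≤ ε ^ 2 * (a ^ (H - 3) * ∫ η : ℝ, Real.exp (-η ^ 2) * |η| ^ (5 - 2 * H)) := by
  have h5 : (-1:ℝ) < 5 - 2 * H := by linarith
  have hint : Integrable (fun ξ : ℝ => ε ^ 2 * (Real.exp (-a * ξ ^ 2) * |ξ| ^ (5 - 2 * H))) :=
    (intAbs ha h5).const_mul _
  have hmono := integral_mono_of_nonneg
    (f := fun ξ : ℝ => Real.exp (-a * ξ ^ 2) * (1 - Real.exp (-ε * ξ ^ 2)) ^ 2 * |ξ| ^ (1 - 2 * H))
    (g := fun ξ : ℝ => ε ^ 2 * (Real.exp (-a * ξ ^ 2) * |ξ| ^ (5 - 2 * H)))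
    (μ := volume)
    (Filter.Eventually.of_forall (fun ξ => by positivity))
    hint
    (Filter.Eventually.of_forall (fun ξ => ptwise hH2 hε ξ))
  calc (∫ ξ : ℝ, Real.exp (-a * ξ ^ 2) * (1 - Real.exp (-ε * ξ ^ 2)) ^ 2 * |ξ| ^ (1 - 2 * H))
      ≤ ∫ ξ : ℝ, ε ^ 2 * (Real.exp (-a * ξ ^ 2) * |ξ| ^ (5 - 2 * H)) := hmono
    _ = ε ^ 2 * (a ^ (H - 3) * ∫ η : ℝ, Real.exp (-η ^ 2) * |η| ^ (5 - 2 * H)) := by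
        rw [integral_const_mul, scale (5 - 2 * H) ha]
        congr 2
        ring

theorem stmt4 (H : ℝ) (hH1 : 1 / 4 < H) (hH2 : H < 1 / 2) :
    ∃ C : ℝ, 0 < C ∧
      C = ((2 : ℝ) ^ (H - 3) / (2 - H)) * (∫ η : ℝ, Real.exp (-η ^ 2) * |η| ^ (5 - 2 * H)) ∧
      ∀ θ ε t : ℝ, 0 < θ → θ < 1 → 0 < ε → ε < 1 → ε ^ θ ≤ t →
        (∫ s in Set.Ioo (0 : ℝ) (t - ε ^ θ), ∫ ξ : ℝ,
            Real.exp (-2 * (t - s) * ξ ^ 2) * (1 - Real.exp (-ε * ξ ^ 2)) ^ 2 *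
              |ξ| ^ (1 - 2 * H)) ≤
          C * ε ^ (H + (2 - H) * (1 - θ)) := by
  set I : ℝ := ∫ η : ℝ, Real.exp (-η ^ 2) * |η| ^ (5 - 2 * H) with hIdef
  have h5 : (-1:ℝ) < 5 - 2 * H := by linarith
  have hIint : Integrable (fun η : ℝ => Real.exp (-η ^ 2) * |η| ^ (5 - 2 * H)) := by
    have := intAbs (b := 1) (s := 5 - 2 * H) one_pos h5
    simpa using this
  have hIpos : 0 < I := by
    rw [hIdef, integral_pos_iff_support_of_nonneg (fun η => by positivity) hIint]
    have hsub : Ioi (0:ℝ) ⊆ Function.support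
        (fun η : ℝ => Real.exp (-η ^ 2) * |η| ^ (5 - 2 * H)) := by
      intro x hx
      have hx' : (0:ℝ) < |x| := abs_pos.mpr (ne_of_gt hx)
      have : (0:ℝ) < Real.exp (-x ^ 2) * |x| ^ (5 - 2 * H) := by positivity
      exact this.ne'
    have h0 : (0:ENNReal) < volume (Ioi (0:ℝ)) := by simp [Real.volume_Ioi]
    exact lt_of_lt_of_le h0 (measure_mono hsub)
  have h2H : (0:ℝ) < 2 - H := by linarith
  have h2p : (0:ℝ) < (2:ℝ) ^ (H - 3) := Real.rpow_pos_of_pos two_pos _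
  refine ⟨(2:ℝ) ^ (H - 3) / (2 - H) * I, by positivity, rfl, ?_⟩
  intro θ ε t hθ0 hθ1 hε0 hε1 hεt
  set T := t - ε ^ θ with hTdef
  have hεθ : (0:ℝ) < ε ^ θ := Real.rpow_pos_of_pos hε0 θ
  have hT0 : (0:ℝ) ≤ T := by simp [hTdef]; linarith
  have htpos : (0:ℝ) < t := lt_of_lt_of_le hεθ hεt
  -- step A : bound the integrand on Ioo 0 T
  have hcont : ContinuousOn (fun s : ℝ => ε ^ 2 * ((2 * (t - s)) ^ (H - 3) * I)) (Icc 0 T) := by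
    apply ContinuousOn.mul continuousOn_const
    apply ContinuousOn.mul _ continuousOn_const
    apply ContinuousOn.rpow_const
    · exact (continuous_const.mul (continuous_const.sub continuous_id)).continuousOn
    · intro s hs
      left
      have hsT : s ≤ T := hs.2
      have h' : ε ^ θ ≤ t - s := by simp [hTdef] at hsT ⊢; linarith
      have : (0:ℝ) < 2 * (t - s) := by linarith
      exact this.ne'
  have hg : IntegrableOn (fun s : ℝ => ε ^ 2 * ((2 * (t - s)) ^ (H - 3) * I)) (Ioo 0 T) :=
    (hcont.integrableOn_Icc).mono_set Ioo_subset_Icc_self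
  have hstep1 : (∫ s in Set.Ioo (0:ℝ) T, ∫ ξ : ℝ,
        Real.exp (-2 * (t - s) * ξ ^ 2) * (1 - Real.exp (-ε * ξ ^ 2)) ^ 2 * |ξ| ^ (1 - 2 * H))
      ≤ ∫ s in Set.Ioo (0:ℝ) T, ε ^ 2 * ((2 * (t - s)) ^ (H - 3) * I) := by
    apply integral_mono_of_nonneg
    · exact Filter.Eventually.of_forall fun s => integral_nonneg fun ξ => by positivity
    · exact hg
    · filter_upwards [ae_restrict_mem measurableSet_Ioo] with s hs
      have hsT : s < T := hs.2
      have hts : (0:ℝ) < 2 * (t - s) := by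
        have : ε ^ θ < t - s := by simp [hTdef] at hsT ⊢; linarith
        linarith
      have := inner_le hH2 hε0.le hts
      simpa [neg_mul, mul_assoc] using this
  -- step B : compute the bound integral
  have hB : (∫ s in Set.Ioo (0:ℝ) T, ε ^ 2 * ((2 * (t - s)) ^ (H - 3) * I))
      = ε ^ 2 * ((∫ s in Set.Ioo (0:ℝ) T, (2 * (t - s)) ^ (H - 3)) * I) := by
    rw [integral_const_mul, integral_mul_const]
  -- step C : bound J
  set J : ℝ := ∫ s in Set.Ioo (0:ℝ) T, (2 * (t - s)) ^ (H - 3) with hJdef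
  have hJval : J = (2:ℝ) ^ (H - 3) * ((t ^ (H - 2) - (ε ^ θ) ^ (H - 2)) / (H - 2)) := by
    rw [hJdef, ← integral_Ioc_eq_integral_Ioo, ← intervalIntegral.integral_of_le hT0]
    rw [show (∫ s in (0:ℝ)..T, (2 * (t - s)) ^ (H - 3))
        = ∫ u in (t - T)..(t - 0), (2 * u) ^ (H - 3) from
        intervalIntegral.integral_comp_sub_left (fun u : ℝ => (2 * u) ^ (H - 3)) t]
    rw [sub_zero, show t - T = ε ^ θ by simp [hTdef]]
    rw [intervalIntegral.integral_congr (g := fun u : ℝ => (2:ℝ) ^ (H - 3) * u ^ (H - 3)) ?_]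
    · rw [intervalIntegral.integral_const_mul, integral_rpow (Or.inr ⟨by intro h; linarith,
        by rw [Set.uIcc_of_le hεt]; intro h; exact absurd h.1 (not_le.mpr hεθ)⟩)]
      rw [show H - 3 + 1 = H - 2 by ring]
    · intro u hu
      rw [Set.uIcc_of_le hεt] at hu
      have hu0 : (0:ℝ) < u := lt_of_lt_of_le hεθ hu.1
      simp only
      rw [Real.mul_rpow (by norm_num) hu0.le]
  have htH2 : (0:ℝ) < t ^ (H - 2) := Real.rpow_pos_of_pos htpos _
  have hJle : J ≤ (2:ℝ) ^ (H - 3) * ((ε ^ θ) ^ (H - 2) / (2 - H)) := by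
    rw [hJval]
    have : (t ^ (H - 2) - (ε ^ θ) ^ (H - 2)) / (H - 2)
        = ((ε ^ θ) ^ (H - 2) - t ^ (H - 2)) / (2 - H) := by
      rw [show H - 2 = -(2 - H) by ring, div_neg, ← neg_div, neg_sub]
    rw [this]
    gcongr
    linarith
  -- step D : combine
  have hεpow : (0:ℝ) < (ε ^ θ) ^ (H - 2) := Real.rpow_pos_of_pos hεθ _
  have hfinal : ε ^ 2 * (((2:ℝ) ^ (H - 3) * ((ε ^ θ) ^ (H - 2) / (2 - H))) * I)
      = ((2:ℝ) ^ (H - 3) / (2 - H) * I) * ε ^ (H + (2 - H) * (1 - θ)) := by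
    have h1 : (ε ^ θ) ^ (H - 2) = ε ^ (θ * (H - 2)) :=
      (Real.rpow_mul hε0.le θ (H - 2)).symm
    have h2 : ε ^ (2:ℕ) * ε ^ (θ * (H - 2)) = ε ^ (H + (2 - H) * (1 - θ)) := by
      rw [show H + (2 - H) * (1 - θ) = ((2:ℕ):ℝ) + θ * (H - 2) by push_cast; ring,
        Real.rpow_add hε0, Real.rpow_natCast]
    rw [h1, ← h2]
    ring
  calc (∫ s in Set.Ioo (0:ℝ) T, ∫ ξ : ℝ,
        Real.exp (-2 * (t - s) * ξ ^ 2) * (1 - Real.exp (-ε * ξ ^ 2)) ^ 2 * |ξ| ^ (1 - 2 * H))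
      ≤ ∫ s in Set.Ioo (0:ℝ) T, ε ^ 2 * ((2 * (t - s)) ^ (H - 3) * I) := hstep1
    _ = ε ^ 2 * (J * I) := hB
    _ ≤ ε ^ 2 * (((2:ℝ) ^ (H - 3) * ((ε ^ θ) ^ (H - 2) / (2 - H))) * I) := by
        apply mul_le_mul_of_nonneg_left _ (by positivity)
        exact mul_le_mul_of_nonneg_right hJle hIpos.le
    _ = ((2:ℝ) ^ (H - 3) / (2 - H) * I) * ε ^ (H + (2 - H) * (1 - θ)) := hfinal
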